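/- Let α, k ≥ 1 be integers, n = 2α(α+4)k + 2α + 5, and S = {±(2αℓ+1) : 0 ≤ ℓ ≤ k} ⊆ ℤ/nℤ. Then R_{2α+2}(S) = ℤ/nℤ \ (S ∪ {0}). -/

import Mathlib

/-- `R_m(S)`: sums of `m` elements of `S` admitting an ordering with no
consecutive sub-sum (of length at least two) equal to `0`. -/
def Rset {Γ : Type*} [AddCommGroup Γ] (m : ℕ) (S : Set Γ) : Set Γ :=
  {x | ∃ s : Fin m → Γ, (∀ i, s i ∈ S) ∧
    (∀ i j : Fin m, i < j → ∑ t ∈ Finset.Icc i j, s t ≠ 0) ∧ ∑ i, s i = x}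

lemma intCast_ne_zero_of_abs_lt {N : ℕ} {x : ℤ} (hx : x ≠ 0) (h : |x| < N) :
    (x : ZMod N) ≠ 0 := by
  rw [Ne, ZMod.intCast_zmod_eq_zero_iff_dvd]
  intro hdvd
  have h1 : (N : ℤ) ≤ |x| := Int.le_of_dvd (abs_pos.mpr hx) ((dvd_abs _ _).mpr hdvd)
  omega

lemma master {n : ℕ} (m : ℕ) (S : Set (ZMod n)) (t : ℕ → ℤ)
    (hmem : ∀ i, i < m → ((t i : ZMod n)) ∈ S)
    (hQ : ∀ i j : ℕ, i < j → j ≤ m →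
      (∑ x ∈ Finset.range j, t x) - (∑ x ∈ Finset.range i, t x) ≠ 0 ∧
      |(∑ x ∈ Finset.range j, t x) - (∑ x ∈ Finset.range i, t x)| < n) :
    ((∑ x ∈ Finset.range m, t x : ℤ) : ZMod n) ∈ Rset m S := by
  refine ⟨fun i => ((t i.val : ℤ) : ZMod n), fun i => hmem i.val i.isLt, ?_, ?_⟩
  · intro i j hij
    have hmap : ∑ u ∈ Finset.Icc i j, ((t u.val : ℤ) : ZMod n)
        = ((∑ u ∈ Finset.Icc i.val j.val, t u : ℤ) : ZMod n) := by
      rw [← Fin.map_valEmbedding_Icc, Finset.sum_map]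
      push_cast
      rfl
    have hsub : ∑ u ∈ Finset.Icc (i : ℕ) (j : ℕ), t u
        = (∑ x ∈ Finset.range (j.val + 1), t x) - (∑ x ∈ Finset.range i.val, t x) := by
      rw [← Finset.Ico_add_one_right_eq_Icc, Finset.sum_Ico_eq_sub _ (by omega)]
    obtain ⟨h1, h2⟩ := hQ i.val (j.val + 1) (by omega) (by omega)
    rw [hmap, hsub]
    exact intCast_ne_zero_of_abs_lt h1 h2
  · rw [show (∑ x ∈ Finset.range m, t x) = ∑ i : Fin m, t i.val from
      (Fin.sum_univ_eq_sum_range (fun i => t i) m).symm]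
    push_cast
    rfl

lemma shape2 {n : ℕ} (S : Set (ZMod n)) (a k P M A : ℕ)
    (hS1 : ∀ ℓ, ℓ ≤ k → (((a * ℓ + 1 : ℕ) : ZMod n) ∈ S))
    (hSm : ((-1 : ℤ) : ZMod n) ∈ S)
    (hA : A ≤ P * k) (hP : 1 ≤ P) (ha : 1 ≤ a) (hk : 1 ≤ k)
    (hM : M = 0 ∨ (1 ≤ A ∧ M ≤ a))
    (hpeak : a * A + P < n) :
    (((a * A + P - M : ℤ)) : ZMod n) ∈ Rset (P + M) S := by
  classical
  set L : ℕ → ℕ := fun c => A - (P - c) * k with hL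
  set t : ℕ → ℤ := fun i => if i < P then ((a * (L (i + 1) - L i) + 1 : ℕ) : ℤ) else -1 with ht
  have hLmono : Monotone L := by
    apply monotone_nat_of_le_succ
    intro c
    exact Nat.sub_le_sub_left (Nat.mul_le_mul_right k (Nat.sub_le_sub_left (Nat.le_succ c) P)) A
  have hLk : ∀ c, L (c + 1) ≤ L c + k := by
    intro c
    have h1 : (P - c) * k ≤ (P - (c + 1)) * k + k := by
      have h2 : P - c ≤ (P - (c + 1)) + 1 := by omega
      calc (P - c) * k ≤ ((P - (c + 1)) + 1) * k := Nat.mul_le_mul_right k h2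
        _ = (P - (c + 1)) * k + k := by ring
    simp only [hL]
    omega
  have hLA : ∀ c, L c ≤ A := fun c => Nat.sub_le _ _
  have hL0 : L 0 = 0 := by
    show A - (P - 0) * k = 0
    rw [Nat.sub_zero]
    omega
  have hLP : ∀ c, P ≤ c → L c = A := by
    intro c hc
    show A - (P - c) * k = A
    have h3 : P - c = 0 := by omega
    rw [h3]
    omega
  set Qf : ℕ → ℤ := fun c => if c ≤ P then ((a * L c + c : ℕ) : ℤ) else (a * A + P : ℤ) - (c - P) with hQf
  have hQspec : ∀ c, (∑ x ∈ Finset.range c, t x) = Qf c := by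
    intro c
    induction c with
    | zero => simp [hQf, hL0]
    | succ c ih =>
      rw [Finset.sum_range_succ, ih]
      by_cases hc : c < P
      · have hc1 : c + 1 ≤ P := hc
        obtain ⟨d, hd⟩ : ∃ d, L (c + 1) = L c + d := ⟨L (c + 1) - L c, by have := hLmono (show c ≤ c + 1 by omega); omega⟩
        simp only [hQf, ht, if_pos hc, if_pos hc1, if_pos (le_of_lt hc)]
        rw [hd, Nat.add_sub_cancel_left]
        push_cast
        ring
      · have hc1 : ¬ (c + 1 ≤ P) := by omega
        simp only [hQf, ht, if_neg hc, if_neg hc1]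
        by_cases hcP : c ≤ P
        · have hcp : c = P := by omega
          subst hcp
          rw [if_pos le_rfl, hLP c le_rfl]
          push_cast
          ring
        · rw [if_neg hcP]
          push_cast
          ring
  have hTnn : (0 : ℤ) ≤ (a : ℤ) * A + P - M := by
    rcases hM with h | ⟨hA1, hMa⟩
    · subst h
      have h1 : (0:ℤ) ≤ (a:ℤ) * A := by positivity
      have h2 : (0:ℤ) ≤ (P:ℤ) := Int.natCast_nonneg P
      simp
      linarith
    · have h1 : (M : ℤ) ≤ a := by exact_mod_cast hMa
      have h2 : (1 : ℤ) ≤ A := by exact_mod_cast hA1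
      have h3 : (a : ℤ) ≤ a * A := by nlinarith [Int.natCast_nonneg a]
      linarith [Int.natCast_nonneg P]
  have hQbound : ∀ c, c ≤ P + M → (0 : ℤ) ≤ Qf c ∧ Qf c ≤ (a : ℤ) * A + P := by
    intro c hc
    simp only [hQf]
    by_cases h : c ≤ P
    · rw [if_pos h]
      refine ⟨Int.natCast_nonneg _, ?_⟩
      have h1 : ((L c : ℕ) : ℤ) ≤ A := by exact_mod_cast hLA c
      have h2 : (a : ℤ) * L c ≤ (a : ℤ) * A := by nlinarith [Int.natCast_nonneg a]
      have h3 : (c : ℤ) ≤ P := by exact_mod_cast h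
      push_cast
      linarith
    · rw [if_neg h]
      have h1 : (c : ℤ) - P ≤ M := by
        have : (c : ℤ) ≤ P + M := by exact_mod_cast hc
        linarith
      have h2 : (0 : ℤ) ≤ (c : ℤ) - P := by
        have : (P : ℤ) ≤ c := by exact_mod_cast (le_of_not_ge h)
        linarith
      constructor
      · linarith
      · linarith
  have hQdown : ∀ c, P ≤ c → Qf c = (a * A + P : ℤ) - (c - P) := by
    intro c hcP
    simp only [hQf]
    by_cases h : c ≤ P
    · have hcp : c = P := le_antisymm h hcP
      subst hcp
      rw [if_pos le_rfl, hLP c le_rfl]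
      push_cast
      ring
    · rw [if_neg h]
  have hQne : ∀ i j : ℕ, i < j → j ≤ P + M → Qf j - Qf i ≠ 0 := by
    intro i j hij hj
    by_cases hjP : j ≤ P
    · have hiP : i ≤ P := by omega
      simp only [hQf, if_pos hjP, if_pos hiP]
      have h1 : L i ≤ L j := hLmono (le_of_lt hij)
      have h2 : a * L i ≤ a * L j := Nat.mul_le_mul_left a h1
      have h3 : a * L i + i < a * L j + j := by omega
      have h4 : ((a * L i + i : ℕ) : ℤ) < ((a * L j + j : ℕ) : ℤ) := by exact_mod_cast h3
      omega
    · by_cases hiP : P ≤ i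
      · rw [hQdown i hiP, hQdown j (by omega)]
        have h5 : (i : ℤ) < j := by exact_mod_cast hij
        intro hcon
        omega
      · push_neg at hiP
        rcases hM with h0 | ⟨hA1, hMa⟩
        · omega
        · have hQi : Qf i = ((a * L i + i : ℕ) : ℤ) := by
            simp only [hQf, if_pos (le_of_lt hiP)]
          have hQj : Qf j = (a * A + P : ℤ) - (j - P) := hQdown j (by omega)
          have hLi : L i ≤ A - k := by
            have h1 : L i ≤ L (P - 1) := hLmono (by omega)
            have h2 : L (P - 1) = A - k := by
              show A - (P - (P - 1)) * k = A - k
              have h6 : P - (P - 1) = 1 := by omega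
              rw [h6, one_mul]
            omega
          have hub : Qf i < (a : ℤ) * A + P - M := by
            rw [hQi]
            have h1 : a * (A - k) ≤ a * (A - 1) := Nat.mul_le_mul_left a (by omega)
            have h2 : a * (A - 1) + a = a * A := by
              have h7 : A - 1 + 1 = A := by omega
              calc a * (A - 1) + a = a * ((A - 1) + 1) := by ring
                _ = a * A := by rw [h7]
            have h3 : a * L i ≤ a * (A - k) := Nat.mul_le_mul_left a hLi
            have h4 : a * L i + i + M < a * A + P := by omega
            have h5 : ((a * L i + i + M : ℕ) : ℤ) < ((a * A + P : ℕ) : ℤ) := by exact_mod_cast h4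
            push_cast at h5 ⊢
            linarith
          have hlb : (a : ℤ) * A + P - M ≤ Qf j := by
            rw [hQj]
            have h8 : (j : ℤ) ≤ P + M := by exact_mod_cast hj
            linarith
          omega
  have hmem : ∀ i, i < P + M → ((t i : ZMod n)) ∈ S := by
    intro i _
    by_cases h : i < P
    · simp only [ht, if_pos h]
      have h9 : L (i + 1) - L i ≤ k := by have := hLk i; omega
      rw [Int.cast_natCast]
      exact hS1 _ h9
    · simp only [ht, if_neg h]
      exact_mod_cast hSm
  have hfin : (∑ x ∈ Finset.range (P + M), t x) = (a : ℤ) * A + P - M := by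
    rw [hQspec]
    simp only [hQf]
    by_cases h : P + M ≤ P
    · have hM0 : M = 0 := by omega
      rw [if_pos h, hLP _ (by omega)]
      subst hM0
      push_cast
      ring
    · rw [if_neg h]
      push_cast
      ring
  have hres := master (P + M) S t hmem ?_
  · rwa [hfin] at hres
  · intro i j hij hj
    refine ⟨by rw [hQspec, hQspec]; exact hQne i j hij hj, ?_⟩
    rw [hQspec, hQspec]
    have h1 := hQbound i (by omega)
    have h2 := hQbound j hj
    have h3 : ((a * A + P : ℕ) : ℤ) < n := by exact_mod_cast hpeak
    rw [abs_lt]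
    push_cast at h3
    constructor
    · linarith [h1.1, h1.2, h2.1, h2.2]
    · linarith [h1.1, h1.2, h2.1, h2.2]

lemma shape3 {n : ℕ} (S : Set (ZMod n)) (a k M T : ℕ)
    (hS1 : ∀ ℓ, ℓ ≤ k → (((a * ℓ + 1 : ℕ) : ZMod n) ∈ S))
    (hSneg : ∀ ℓ, ℓ ≤ k → ((-((a * ℓ + 1 : ℕ) : ZMod n)) ∈ S))
    (hM : 1 ≤ M) (hT : 1 ≤ T)
    (hP : M + T ≤ a * k + 1)
    (hspread : a * k + (M + T) < n) :
    ((T : ℤ) : ZMod n) ∈ Rset (2 * M + T) S := by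
  classical
  set P : ℕ := M + T with hPdef
  set b : ℕ := a * k + 1 with hb
  set t : ℕ → ℤ := fun i => if i = 0 then (b : ℤ) else if i < P then 1 else
      if i = P then -(b : ℤ) else -1 with ht
  set Qf : ℕ → ℤ := fun c => if c = 0 then 0 else if c ≤ P then ((a * k + c : ℕ) : ℤ)
      else 2 * (P : ℤ) - c with hQf
  have hP2 : 2 ≤ P := by omega
  have ht0 : t 0 = (b : ℤ) := by simp [ht]
  have ht1 : ∀ c, c ≠ 0 → c < P → t c = 1 := by
    intro c h1 h2
    simp only [ht, if_neg h1, if_pos h2]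
  have htP : t P = -(b : ℤ) := by
    simp only [ht, if_neg (by omega : ¬ P = 0), if_neg (by omega : ¬ P < P)]
    simp
  have ht2 : ∀ c, P < c → t c = -1 := by
    intro c h1
    simp only [ht, if_neg (by omega : ¬ c = 0), if_neg (by omega : ¬ c < P),
      if_neg (by omega : ¬ c = P)]
  have hq0 : Qf 0 = 0 := by simp [hQf]
  have hqup : ∀ c, c ≠ 0 → c ≤ P → Qf c = ((a * k + c : ℕ) : ℤ) := by
    intro c h1 h2
    simp only [hQf, if_neg h1, if_pos h2]
  have hqdown : ∀ c, P < c → Qf c = 2 * (P : ℤ) - c := by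
    intro c h1
    simp only [hQf, if_neg (by omega : ¬ c = 0), if_neg (by omega : ¬ c ≤ P)]
  have hQspec : ∀ c, (∑ x ∈ Finset.range c, t x) = Qf c := by
    intro c
    induction c with
    | zero => simp [hq0]
    | succ c ih =>
      rw [Finset.sum_range_succ, ih]
      by_cases hc0 : c = 0
      · subst hc0
        rw [hq0, ht0, hqup 1 (by omega) (by omega), hb]
        push_cast
        ring
      · by_cases hcP : c < P
        · rw [hqup c hc0 (le_of_lt hcP), ht1 c hc0 hcP, hqup (c + 1) (by omega) hcP]
          push_cast
          ring
        · by_cases hceq : c = P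
          · rw [hqup c hc0 (le_of_eq hceq), hqdown (c + 1) (by omega), hceq, htP]
            push_cast
            omega
          · rw [hqdown c (by omega), ht2 c (by omega), hqdown (c + 1) (by omega)]
            push_cast
            ring
  have hQbound : ∀ c, c ≤ 2 * M + T → (0 : ℤ) ≤ Qf c ∧ Qf c ≤ (a : ℤ) * k + P := by
    intro c hc
    have hPb : (P : ℤ) = M + T := by exact_mod_cast hPdef
    by_cases hc0 : c = 0
    · subst hc0
      rw [hq0]
      refine ⟨le_refl 0, by positivity⟩
    · by_cases hcP : c ≤ P
      · rw [hqup c hc0 hcP]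
        have h1 : (c : ℤ) ≤ P := by exact_mod_cast hcP
        refine ⟨Int.natCast_nonneg _, by push_cast; linarith⟩
      · rw [hqdown c (by omega)]
        have h1 : (c : ℤ) ≤ 2 * M + T := by exact_mod_cast hc
        have h2 : (P : ℤ) < c := by exact_mod_cast (show P < c by omega)
        have h4 : (0:ℤ) ≤ (a:ℤ) * k := by positivity
        have h5 : (1:ℤ) ≤ T := by exact_mod_cast hT
        constructor <;> omega
  have hQne : ∀ i j : ℕ, i < j → j ≤ 2 * M + T → Qf j - Qf i ≠ 0 := by
    intro i j hij hj
    have hPb : (P : ℤ) = M + T := by exact_mod_cast hPdef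
    have hPak : (P : ℤ) ≤ (a:ℤ) * k + 1 := by exact_mod_cast hP
    by_cases hi0 : i = 0
    · subst hi0
      rw [hq0]
      by_cases hjP : j ≤ P
      · rw [hqup j (by omega) hjP]
        have : (0:ℤ) < ((a * k + j : ℕ) : ℤ) := by
          have : 0 < a * k + j := by omega
          exact_mod_cast this
        omega
      · rw [hqdown j (by omega)]
        have h1 : (j : ℤ) ≤ 2 * M + T := by exact_mod_cast hj
        have h2 : (P : ℤ) < j := by exact_mod_cast (by omega : P < j)
        omega
    · by_cases hjP : j ≤ P
      · rw [hqup j (by omega) hjP, hqup i hi0 (by omega)]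
        have : a * k + i < a * k + j := by omega
        have h4 : ((a * k + i : ℕ) : ℤ) < ((a * k + j : ℕ) : ℤ) := by exact_mod_cast this
        omega
      · by_cases hiP : i ≤ P
        · -- up vs down : up ≥ ak+1 > P-1 ≥ down
          rw [hqup i hi0 hiP, hqdown j (by omega)]
          have h2 : (P : ℤ) < j := by exact_mod_cast (by omega : P < j)
          have h5 : ((a * k + 1 : ℕ) : ℤ) ≤ ((a * k + i : ℕ) : ℤ) := by
            have : a * k + 1 ≤ a * k + i := by omega
            exact_mod_cast this
          have h6 : ((a * k + 1 : ℕ):ℤ) = (a:ℤ) * k + 1 := by push_cast; ring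
          omega
        · rw [hqdown i (by omega), hqdown j (by omega)]
          have h7 : (i : ℤ) < j := by exact_mod_cast hij
          omega
  have hmem : ∀ i, i < 2 * M + T → ((t i : ZMod n)) ∈ S := by
    intro i hi
    by_cases hi0 : i = 0
    · subst hi0
      rw [ht0, hb, Int.cast_natCast]
      exact hS1 k le_rfl
    · by_cases hiP : i < P
      · rw [ht1 i hi0 hiP]
        have := hS1 0 (by omega)
        simp only [Nat.mul_zero, Nat.zero_add] at this
        push_cast
        exact_mod_cast this
      · by_cases hieq : i = P
        · rw [hieq, htP, hb]
          push_cast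
          exact_mod_cast hSneg k le_rfl
        · rw [ht2 i (by omega)]
          have := hSneg 0 (by omega)
          simp only [Nat.mul_zero, Nat.zero_add] at this
          push_cast
          exact_mod_cast this
  have hfin : (∑ x ∈ Finset.range (2 * M + T), t x) = (T : ℤ) := by
    rw [hQspec, hqdown _ (by omega)]
    have hPb : (P : ℤ) = M + T := by exact_mod_cast hPdef
    push_cast
    omega
  have hres := master (2 * M + T) S t hmem ?_
  · rwa [hfin] at hres
  · intro i j hij hj
    refine ⟨by rw [hQspec, hQspec]; exact hQne i j hij hj, ?_⟩
    rw [hQspec, hQspec]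
    have h1 := hQbound i (by omega)
    have h2 := hQbound j hj
    have h3 : (a : ℤ) * k + P < n := by
      have : ((a * k + (M + T) : ℕ) : ℤ) < n := by exact_mod_cast hspread
      push_cast at this
      have hPb : (P : ℤ) = M + T := by exact_mod_cast hPdef
      omega
    rw [abs_lt]
    constructor
    · linarith [h1.1, h1.2, h2.1, h2.2]
    · linarith [h1.1, h1.2, h2.1, h2.2]

lemma key1 (α k U P M ℓ0 ε : ℤ) (hα : 1 ≤ α) (hk : 1 ≤ k)
    (hP : 0 ≤ P) (hM : 0 ≤ M) (hPM : P + M = 2 * α + 2)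
    (hU1 : U ≤ P * k) (hU2 : -(M * k) ≤ U)
    (hl : 0 ≤ ℓ0) (hlk : ℓ0 ≤ k) (hε : ε = 1 ∨ ε = -1)
    (hc : 2 * α * U + P - M - ε * (2 * α * ℓ0 + 1) = 2 * α * (α + 4) * k + 2 * α + 5) :
    False := by
  have hα0 : (0:ℤ) ≤ α := by linarith
  have hk0 : (0:ℤ) ≤ k := by linarith
  rcases hε with rfl | rfl
  · set X : ℤ := U - ℓ0 - (α + 4) * k - 1 with hX
    have h2P : 2 * P = 2 * α + 8 - 2 * (α * X) := by
      rw [hX]; linear_combination hc + hPM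
    rcases le_or_gt 0 X with hX0 | hX0
    · have hprod : 0 ≤ (α * X) * k := mul_nonneg (mul_nonneg hα0 hX0) hk0
      have e4 : 2 * (P * k) = (2 * α + 8 - 2 * (α * X)) * k := by linear_combination k * h2P
      have e5 : (2 * α + 8 - 2 * (α * X)) * k = 2 * (α * k) + 8 * k - 2 * ((α * X) * k) := by ring
      have e1 : 2 * U = 2 * X + 2 * ℓ0 + 2 * (α * k) + 8 * k + 2 := by rw [hX]; ring
      linarith [hU1, hprod, hX0, hl]
    · have hr : α * (-X) = -(α * X) := by ring
      have h6 : α ≤ α * (-X) := le_mul_of_one_le_right hα0 (by linarith)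
      linarith [h2P, hPM, hM]
  · set X : ℤ := U + ℓ0 - (α + 4) * k - 1 with hX
    have h2P : 2 * P = 2 * α + 6 - 2 * (α * X) := by
      rw [hX]; linear_combination hc + hPM
    rcases le_or_gt 0 X with hX0 | hX0
    · have hprod : 0 ≤ (α * X) * k := mul_nonneg (mul_nonneg hα0 hX0) hk0
      have e4 : 2 * (P * k) = (2 * α + 6 - 2 * (α * X)) * k := by linear_combination k * h2P
      have e5 : (2 * α + 6 - 2 * (α * X)) * k = 2 * (α * k) + 6 * k - 2 * ((α * X) * k) := by ring
      have e1 : 2 * U = 2 * X - 2 * ℓ0 + 2 * (α * k) + 8 * k + 2 := by rw [hX]; ring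
      linarith [hU1, hprod, hX0, hlk]
    · have hr : α * (-X) = -(α * X) := by ring
      have h6 : α ≤ α * (-X) := le_mul_of_one_le_right hα0 (by linarith)
      linarith [h2P, hPM, hM]

lemma keyint (α k U P M ℓ0 ε : ℤ) (hα : 1 ≤ α) (hk : 1 ≤ k)
    (hP : 0 ≤ P) (hM : 0 ≤ M) (hPM : P + M = 2 * α + 2)
    (hU1 : U ≤ P * k) (hU2 : -(M * k) ≤ U)
    (hl : 0 ≤ ℓ0) (hlk : ℓ0 ≤ k) (hε : ε = 1 ∨ ε = -1) :
    ¬ ((2 * α * (α + 4) * k + 2 * α + 5 : ℤ) ∣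
        (2 * α * U + P - M - ε * (2 * α * ℓ0 + 1))) := by
  intro hdvd
  obtain ⟨c, hc⟩ := hdvd
  have hα0 : (0:ℤ) ≤ α := by linarith
  have hk0 : (0:ℤ) ≤ k := by linarith
  have hN : 0 < 2 * α * (α + 4) * k + 2 * α + 5 := by
    nlinarith [mul_pos (mul_pos (show (0:ℤ) < 2 * α by linarith)
      (show (0:ℤ) < α + 4 by linarith)) (show (0:ℤ) < k by linarith)]
  have hPb : P ≤ 2 * α + 2 := by linarith
  have hMb : M ≤ 2 * α + 2 := by linarith
  have h1 : 2 * α * U ≤ 2 * α * (P * k) := mul_le_mul_of_nonneg_left hU1 (by linarith)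
  have h2 : P * k ≤ (2 * α + 2) * k := mul_le_mul_of_nonneg_right hPb hk0
  have h3 : 2 * α * (P * k) ≤ 2 * α * ((2 * α + 2) * k) :=
    mul_le_mul_of_nonneg_left h2 (by linarith)
  have h4 : 2 * α * (-(M * k)) ≤ 2 * α * U := mul_le_mul_of_nonneg_left hU2 (by linarith)
  have h5 : M * k ≤ (2 * α + 2) * k := mul_le_mul_of_nonneg_right hMb hk0
  have h6 : 2 * α * (M * k) ≤ 2 * α * ((2 * α + 2) * k) :=
    mul_le_mul_of_nonneg_left h5 (by linarith)
  have h7 : α * ℓ0 ≤ α * k := mul_le_mul_of_nonneg_left hlk hα0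
  have h8 : 0 ≤ α * ℓ0 := mul_nonneg hα0 hl
  have hεb : -(2 * (α * ℓ0) + 1) ≤ ε * (2 * α * ℓ0 + 1) ∧
      ε * (2 * α * ℓ0 + 1) ≤ 2 * (α * ℓ0) + 1 := by
    rcases hε with rfl | rfl
    · constructor <;> nlinarith [h8]
    · constructor <;> nlinarith [h8]
  have hexp1 : 2 * α * ((2 * α + 2) * k) = 4 * (α * (α * k)) + 4 * (α * k) := by ring
  have hexp2 : 2 * α * (α + 4) * k = 2 * (α * (α * k)) + 8 * (α * k) := by ring
  have hαk : (1:ℤ) ≤ α * k := by nlinarith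
  have hααk : 0 ≤ α * (α * k) := by positivity
  have hcb : c = -1 ∨ c = 0 ∨ c = 1 := by
    have hub : 2 * α * U + P - M - ε * (2 * α * ℓ0 + 1)
        < 2 * (2 * α * (α + 4) * k + 2 * α + 5) := by
      linarith [hεb.1, hεb.2, h1, h3, h7, h8, hαk, hααk]
    have hlb : -(2 * (2 * α * (α + 4) * k + 2 * α + 5))
        < 2 * α * U + P - M - ε * (2 * α * ℓ0 + 1) := by
      linarith [hεb.1, hεb.2, h4, h6, h7, h8, hαk, hααk]
    rw [hc] at hub hlb
    have hc2 : c < 2 := by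
      by_contra hcon
      push_neg at hcon
      have : (2 * α * (α + 4) * k + 2 * α + 5) * 2 ≤ (2 * α * (α + 4) * k + 2 * α + 5) * c :=
        mul_le_mul_of_nonneg_left hcon (le_of_lt hN)
      linarith
    have hc3 : -2 < c := by
      by_contra hcon
      push_neg at hcon
      have : (2 * α * (α + 4) * k + 2 * α + 5) * c ≤ (2 * α * (α + 4) * k + 2 * α + 5) * (-2) :=
        mul_le_mul_of_nonneg_left hcon (le_of_lt hN)
      linarith
    omega
  rcases hcb with rfl | rfl | rfl
  · have hε' : -ε = 1 ∨ -ε = -1 := by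
      rcases hε with rfl | rfl
      · exact Or.inr (by norm_num)
      · exact Or.inl (by norm_num)
    refine key1 α k (-U) M P ℓ0 (-ε) hα hk hM hP (by linarith) (by linarith) (by linarith)
      hl hlk hε' ?_
    linear_combination -hc
  · rcases hε with rfl | rfl
    · have e : 2 * (α * U) + P - M - (2 * (α * ℓ0) + 1) = 0 := by linear_combination hc
      omega
    · have e : 2 * (α * U) + P - M + (2 * (α * ℓ0) + 1) = 0 := by linear_combination hc
      omega
  · exact key1 α k U P M ℓ0 ε hα hk hP hM hPM hU1 hU2 hl hlk hε (by linear_combination hc)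

lemma Rset_neg {Γ : Type*} [AddCommGroup Γ] {m : ℕ} {S : Set Γ}
    (hS : ∀ x ∈ S, -x ∈ S) {x : Γ} (hx : x ∈ Rset m S) : -x ∈ Rset m S := by
  obtain ⟨s, h1, h2, h3⟩ := hx
  refine ⟨fun i => -(s i), fun i => hS _ (h1 i), fun i j hij => ?_, ?_⟩
  · rw [Finset.sum_neg_distrib, neg_ne_zero]
    exact h2 i j hij
  · rw [Finset.sum_neg_distrib, h3]

lemma buildEven (α k n : ℕ) (hα : 1 ≤ α) (hk : 1 ≤ k)
    (hn : n = 2 * α * (α + 4) * k + 2 * α + 5) (S : Set (ZMod n))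
    (hS1 : ∀ ℓ, ℓ ≤ k → (((2 * α * ℓ + 1 : ℕ) : ZMod n) ∈ S))
    (hSneg1 : ∀ ℓ, ℓ ≤ k → (-(((2 * α * ℓ + 1 : ℕ)) : ZMod n) ∈ S))
    (r : ℕ) (hr : r < n) (hrE : Even r) (hr0 : r ≠ 0)
    (hexcl : ∀ ℓ, ℓ ≤ k → r + (2 * α * ℓ + 1) ≠ n) :
    ((r : ℕ) : ZMod n) ∈ Rset (2 * α + 2) S := by
  have hSm : ((-1 : ℤ) : ZMod n) ∈ S := by
    have h := hSneg1 0 (Nat.zero_le k)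
    simp only [Nat.mul_zero, Nat.zero_add] at h
    simpa using h
  obtain ⟨r2, hr2⟩ := hrE
  set q := r / (2 * α) with hq
  set e := r % (2 * α) with he
  have hdm : 2 * α * q + e = r := Nat.div_add_mod r (2 * α)
  have hea : e < 2 * α := Nat.mod_lt r (by omega)
  obtain ⟨w, hw⟩ : ∃ w, 2 * α * q = 2 * w := ⟨α * q, by ring⟩
  have he2 : e % 2 = 0 := by omega
  have hr1 : r + 1 ≠ n := by
    have := hexcl 0 (Nat.zero_le k)
    simpa using this
  by_cases hra : r ≤ 2 * α
  · -- shape 3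
    set M := (2 * α + 2 - r) / 2 with hM
    have hM1 : 1 ≤ M := by omega
    have hMeq : 2 * M + r = 2 * α + 2 := by omega
    have hak : 2 * α * 1 ≤ 2 * α * k := Nat.mul_le_mul_left _ hk
    have h1 : M + r ≤ 2 * α * k + 1 := by omega
    have h2 : 2 * α * k + (M + r) < n := by
      have e3 : 2 * α * (α + 4) * k = 2 * α * k + 2 * α * k * (α + 3) := by ring
      omega
    have hres := shape3 S (2 * α) k M r hS1 hSneg1 hM1 (by omega) h1 h2
    rw [hMeq] at hres
    exact_mod_cast hres
  · push_neg at hra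
    -- value of q is at least 1
    have hq1 : 1 ≤ q := by
      rcases Nat.eq_zero_or_pos q with h | h
      · rw [h, Nat.mul_zero] at hdm; omega
      · exact h
    by_cases he0 : e = 0
    · -- e = 0
      have hq2 : 2 ≤ q := by
        rcases (by omega : q = 1 ∨ 2 ≤ q) with h | h
        · rw [h, Nat.mul_one] at hdm; omega
        · exact h
      by_cases hα1 : α = 1
      · -- α = 1 : P = 4, M = 0, A = q - 2
        subst hα1
        obtain ⟨A, hA⟩ : ∃ A, q = A + 2 := ⟨q - 2, by omega⟩
        have hub : A ≤ 4 * k := by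
          by_contra hcon
          push_neg at hcon
          have := hexcl (5 * k + 3 - q) (by omega)
          omega
        have hres := shape2 S (2 * 1) k 4 0 A hS1 hSm (by omega) (by omega) (by omega) hk
          (Or.inl rfl) (by omega)
        rw [show (4 + 0 : ℕ) = 2 * 1 + 2 from rfl] at hres
        have hval : ((2 * 1 : ℕ) : ℤ) * A + 4 - 0 = (r : ℤ) := by push_cast; omega
        rw [show ((2 * 1 : ℕ) : ℤ) * A + 4 - 0 = ((2 * 1 : ℕ) : ℤ) * (A : ℤ) + (4 : ℕ) - ((0 : ℕ) : ℤ) from by push_cast; ring] at hval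
        rw [hval] at hres
        exact_mod_cast hres
      · -- α ≥ 2 : P = 2α + 1, M = 1, A = q - 1
        have hα2 : 2 ≤ α := by omega
        obtain ⟨A, hA⟩ : ∃ A, q = A + 1 := ⟨q - 1, by omega⟩
        have h2aq : 2 * α * q = 2 * α * A + 2 * α := by rw [hA]; ring
        have hub : A ≤ (2 * α + 1) * k := by
          by_cases hα3 : α = 2
          · subst hα3
            by_contra hcon
            push_neg at hcon
            have := hexcl (6 * k + 2 - q) (by omega)
            omega
          · -- α ≥ 3 : q ≤ (α+4)k + 1 suffices
            have hq4 : q ≤ (α + 4) * k + 1 := by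
              by_contra hcon
              push_neg at hcon
              have h5 : 2 * α * ((α + 4) * k + 2) ≤ 2 * α * q :=
                Nat.mul_le_mul_left _ (by omega)
              have h6 : 2 * α * ((α + 4) * k + 2) = 2 * α * (α + 4) * k + 4 * α := by ring
              omega
            have h7 : (α + 4) * k ≤ (2 * α + 1) * k :=
              Nat.mul_le_mul_right _ (by omega)
            omega
        have hres := shape2 S (2 * α) k (2 * α + 1) 1 A hS1 hSm hub (by omega) (by omega) hk
          (Or.inr ⟨by omega, by omega⟩) (by omega)
        rw [show 2 * α + 1 + 1 = 2 * α + 2 from by omega] at hres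
        have hval : ((2 * α : ℕ) : ℤ) * (A : ℕ) + ((2 * α + 1 : ℕ) : ℤ) - ((1 : ℕ) : ℤ) = ((r : ℕ) : ℤ) := by
          push_cast
          have hz : ((2 * α * q : ℕ) : ℤ) = 2 * (α : ℤ) * q := by push_cast; ring
          have hz2 : ((2 * α * A : ℕ) : ℤ) = 2 * (α : ℤ) * A := by push_cast; ring
          have hz3 : (2 : ℤ) * (α : ℤ) * q = 2 * (α : ℤ) * A + 2 * α := by
            rw [← hz, ← hz2, h2aq]; push_cast; ring
          have hz4 : ((r : ℕ) : ℤ) = 2 * (α : ℤ) * q + e := by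
            rw [← hz]; exact_mod_cast hdm.symm
          rw [hz4]
          omega
        rw [hval] at hres
        exact_mod_cast hres
    · -- e ≥ 2
      have hα2 : 2 ≤ α := by omega
      obtain ⟨h, hh⟩ : ∃ h, e = 2 * h := ⟨e / 2, by omega⟩
      by_cases he2' : e = 2
      · -- P = 2α + 2, M = 0, A = q - 1
        obtain ⟨A, hA⟩ : ∃ A, q = A + 1 := ⟨q - 1, by omega⟩
        have h2aq : 2 * α * q = 2 * α * A + 2 * α := by rw [hA]; ring
        have hub : A ≤ (2 * α + 2) * k := by
          have hq4 : q ≤ (α + 4) * k + 1 := by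
            by_contra hcon
            push_neg at hcon
            have h5 : 2 * α * ((α + 4) * k + 2) ≤ 2 * α * q :=
              Nat.mul_le_mul_left _ (by omega)
            have h6 : 2 * α * ((α + 4) * k + 2) = 2 * α * (α + 4) * k + 4 * α := by ring
            omega
          have h7 : (α + 4) * k ≤ (2 * α + 2) * k :=
            Nat.mul_le_mul_right _ (by omega)
          omega
        have hres := shape2 S (2 * α) k (2 * α + 2) 0 A hS1 hSm hub (by omega) (by omega) hk
          (Or.inl rfl) (by omega)
        rw [show 2 * α + 2 + 0 = 2 * α + 2 from by omega] at hres
        have hval : ((2 * α : ℕ) : ℤ) * (A : ℕ) + ((2 * α + 2 : ℕ) : ℤ) - ((0 : ℕ) : ℤ) = ((r : ℕ) : ℤ) := by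
          have hz : ((2 * α * q : ℕ) : ℤ) = 2 * (α : ℤ) * q := by push_cast; ring
          have hz2 : ((2 * α * A : ℕ) : ℤ) = 2 * (α : ℤ) * A := by push_cast; ring
          have hz3 : (2 : ℤ) * (α : ℤ) * q = 2 * (α : ℤ) * A + 2 * α := by
            rw [← hz, ← hz2, h2aq]; push_cast; ring
          have hz4 : ((r : ℕ) : ℤ) = 2 * (α : ℤ) * q + e := by
            rw [← hz]; exact_mod_cast hdm.symm
          rw [hz4]
          push_cast
          omega
        rw [hval] at hres
        exact_mod_cast hres
      · -- e ≥ 4 : P = α + 1 + h, M = α + 1 - h, A = q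
        have he4 : 4 ≤ e := by omega
        have hα3 : 3 ≤ α := by omega
        have hh2 : 2 ≤ h := by omega
        have hhα : h ≤ α - 1 := by omega
        set P := α + 1 + h with hP
        set M := α + 1 - h with hM
        -- q ≤ (α+4)k + 1 always
        have hq4 : q ≤ (α + 4) * k + 1 := by
          by_contra hcon
          push_neg at hcon
          have h5 : 2 * α * ((α + 4) * k + 2) ≤ 2 * α * q :=
            Nat.mul_le_mul_left _ (by omega)
          have h6 : 2 * α * ((α + 4) * k + 2) = 2 * α * (α + 4) * k + 4 * α := by ring
          omega
        -- q ≤ (α+4)k strictly (q = (α+4)k+1 would force r = n-1)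
        have hq4' : q ≤ (α + 4) * k := by
          by_contra hcon
          push_neg at hcon
          have hqe : q = (α + 4) * k + 1 := by omega
          have h5 : 2 * α * q = 2 * α * (α + 4) * k + 2 * α := by
            rw [hqe]; ring
          omega
        -- refined upper bound on q
        have hq5 : q ≤ (α + 1 + h) * k := by
          by_cases he6 : 6 ≤ e
          · -- q ≤ (α+4)k suffices
            have hq6 : q ≤ (α + 4) * k := by
              by_contra hcon
              push_neg at hcon
              have h5 : 2 * α * ((α + 4) * k + 1) ≤ 2 * α * q :=
                Nat.mul_le_mul_left _ (by omega)
              have h6 : 2 * α * ((α + 4) * k + 1) = 2 * α * (α + 4) * k + 2 * α := by ring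
              omega
            have h7 : (α + 4) * k ≤ (α + 1 + h) * k :=
              Nat.mul_le_mul_right _ (by omega)
            omega
          · -- e = 4, h = 2 : exclusion gives q ≤ (α+3)k
            have he'' : e = 4 := by omega
            have hh'' : h = 2 := by omega
            have hq6 : q ≤ (α + 3) * k := by
              by_contra hcon
              push_neg at hcon
              have hle : (α + 3) * k + 1 ≤ q := hcon
              set L : ℕ := (α + 4) * k + 1 - q with hL
              have hLk : L ≤ k := by
                have : (α + 3) * k + k = (α + 4) * k := by ring
                omega
              have hqL : q + L = (α + 4) * k + 1 := by
                have : (α + 3) * k ≤ (α + 4) * k := Nat.mul_le_mul_right _ (by omega)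
                omega
              have hprod : 2 * α * q + 2 * α * L = 2 * α * ((α + 4) * k + 1) := by
                rw [← Nat.mul_add, hqL]
              have hexp : 2 * α * ((α + 4) * k + 1) = 2 * α * (α + 4) * k + 2 * α := by ring
              have := hexcl L hLk
              omega
            have h7 : (α + 3) * k ≤ (α + 1 + h) * k :=
              Nat.mul_le_mul_right _ (by omega)
            omega
        -- peak bound : r + M + 1 ≤ n
        have hpeak : 2 * α * q + P < n := by
          set c' : ℕ := (α + 4) * k + 1 - q with hc'
          have hc1 : 1 ≤ c' := by omega
          have hqc : q + c' = (α + 4) * k + 1 := by omega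
          have hprod : 2 * α * q + 2 * α * c' = 2 * α * ((α + 4) * k + 1) := by
            rw [← Nat.mul_add, hqc]
          have hexp : 2 * α * ((α + 4) * k + 1) = 2 * α * (α + 4) * k + 2 * α := by ring
          have hc2 : 2 * α * 1 ≤ 2 * α * c' := Nat.mul_le_mul_left _ hc1
          omega
        have hres := shape2 S (2 * α) k P M q hS1 hSm hq5 (by omega) (by omega) hk
          (Or.inr ⟨by omega, by omega⟩) hpeak
        rw [show P + M = 2 * α + 2 from by omega] at hres
        have hval : ((2 * α : ℕ) : ℤ) * (q : ℕ) + (P : ℤ) - (M : ℤ) = ((r : ℕ) : ℤ) := by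
          have hz : ((2 * α * q : ℕ) : ℤ) = 2 * (α : ℤ) * q := by push_cast; ring
          have hz4 : ((r : ℕ) : ℤ) = 2 * (α : ℤ) * q + e := by
            rw [← hz]; exact_mod_cast hdm.symm
          rw [hz4]
          push_cast
          omega
        rw [hval] at hres
        exact_mod_cast hres

theorem stmt6 (α k n : ℕ) (hα : 1 ≤ α) (hk : 1 ≤ k)
    (hn : n = 2 * α * (α + 4) * k + 2 * α + 5)
    (S : Set (ZMod n))
    (hS : S = {x | ∃ ℓ ≤ k, x = ((2 * α * ℓ + 1 : ℕ) : ZMod n) ∨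
      x = -((2 * α * ℓ + 1 : ℕ) : ZMod n)}) :
    Rset (2 * α + 2) S = (S ∪ {0})ᶜ := by
  classical
  have hn5 : 5 ≤ n := by rw [hn]; omega
  haveI : NeZero n := ⟨by omega⟩
  have hS1 : ∀ ℓ, ℓ ≤ k → (((2 * α * ℓ + 1 : ℕ) : ZMod n) ∈ S) := by
    intro ℓ hℓ; rw [hS]; exact ⟨ℓ, hℓ, Or.inl rfl⟩
  have hSneg1 : ∀ ℓ, ℓ ≤ k → (-(((2 * α * ℓ + 1 : ℕ)) : ZMod n) ∈ S) := by
    intro ℓ hℓ; rw [hS]; exact ⟨ℓ, hℓ, Or.inr rfl⟩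
  have hScl : ∀ x ∈ S, -x ∈ S := by
    intro x hx
    rw [hS] at hx ⊢
    obtain ⟨ℓ, hℓ, h | h⟩ := hx
    · exact ⟨ℓ, hℓ, Or.inr (by rw [h])⟩
    · exact ⟨ℓ, hℓ, Or.inl (by rw [h, neg_neg])⟩
  ext x
  simp only [Set.mem_compl_iff, Set.mem_union, Set.mem_singleton_iff]
  constructor
  · rintro ⟨s, hmem, hsub, hsum⟩
    have hfull : ∑ i, s i ≠ 0 := by
      have hij : (⟨0, by omega⟩ : Fin (2 * α + 2)) < ⟨2 * α + 1, by omega⟩ := by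
        simp [Fin.lt_def]
      have hres := hsub ⟨0, by omega⟩ ⟨2 * α + 1, by omega⟩ hij
      have huniv : Finset.Icc (⟨0, by omega⟩ : Fin (2 * α + 2)) ⟨2 * α + 1, by omega⟩
          = Finset.univ := by
        apply Finset.eq_univ_iff_forall.mpr
        intro u
        rw [Finset.mem_Icc, Fin.le_def, Fin.le_def]
        simp only [Fin.val_mk]
        have := u.isLt
        omega
      rwa [huniv] at hres
    rintro (hxS | hx0)
    · -- x ∈ S : impossible by the integer lemma
      have hmem' : ∀ i, ∃ ℓ, ℓ ≤ k ∧ (s i = ((2 * α * ℓ + 1 : ℕ) : ZMod n) ∨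
          s i = -((2 * α * ℓ + 1 : ℕ) : ZMod n)) := by
        intro i
        have h := hmem i
        rw [hS] at h
        exact h
      choose ℓf hℓk hor using hmem'
      set pos : Fin (2 * α + 2) → Prop := fun i => s i = ((2 * α * ℓf i + 1 : ℕ) : ZMod n)
        with hpos
      set t : Fin (2 * α + 2) → ℤ := fun i => if pos i then ((2 * α * ℓf i + 1 : ℕ) : ℤ)
        else -((2 * α * ℓf i + 1 : ℕ) : ℤ) with ht
      have hcast : ∀ i, s i = ((t i : ℤ) : ZMod n) := by
        intro i
        by_cases hp : pos i
        · simp only [ht, if_pos hp]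
          rw [Int.cast_natCast]
          exact hp
        · simp only [ht, if_neg hp]
          have h := (hor i).resolve_left hp
          rw [h, Int.cast_neg, Int.cast_natCast]
      set U : ℤ := ∑ i, (if pos i then (ℓf i : ℤ) else -(ℓf i : ℤ)) with hU
      set Pz : ℤ := ∑ i, (if pos i then (1 : ℤ) else 0) with hPz
      set Mz : ℤ := ∑ i, (if pos i then (0 : ℤ) else 1) with hMz
      have hti : ∀ i, t i = 2 * (α : ℤ) * (if pos i then (ℓf i : ℤ) else -(ℓf i : ℤ))
          + ((if pos i then (1 : ℤ) else 0) - (if pos i then (0 : ℤ) else 1)) := by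
        intro i
        by_cases hp : pos i
        · simp only [ht, if_pos hp]; push_cast; ring
        · simp only [ht, if_neg hp]; push_cast; ring
      have hsumt : ∑ i, t i = 2 * (α : ℤ) * U + (Pz - Mz) := by
        rw [Finset.sum_congr rfl (fun i _ => hti i), Finset.sum_add_distrib,
          Finset.sum_sub_distrib, ← Finset.mul_sum]
      have hP0 : 0 ≤ Pz := Finset.sum_nonneg (fun i _ => by split <;> norm_num)
      have hM0 : 0 ≤ Mz := Finset.sum_nonneg (fun i _ => by split <;> norm_num)
      have hPM : Pz + Mz = 2 * (α : ℤ) + 2 := by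
        rw [← Finset.sum_add_distrib]
        rw [Finset.sum_congr rfl (fun i _ => by
          split <;> ring : ∀ i ∈ Finset.univ, ((if pos i then (1:ℤ) else 0)
            + (if pos i then (0:ℤ) else 1)) = 1)]
        rw [Finset.sum_const, Finset.card_univ, Fintype.card_fin]
        push_cast
        ring
      have hU1 : U ≤ Pz * (k : ℤ) := by
        rw [Finset.sum_mul]
        apply Finset.sum_le_sum
        intro i _
        by_cases hp : pos i
        · simp only [if_pos hp, one_mul]
          exact_mod_cast hℓk i
        · simp only [if_neg hp, zero_mul]
          simp
      have hU2 : -(Mz * (k : ℤ)) ≤ U := by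
        rw [Finset.sum_mul, ← Finset.sum_neg_distrib]
        apply Finset.sum_le_sum
        intro i _
        by_cases hp : pos i
        · simp only [if_pos hp, zero_mul, neg_zero]
          simp
        · simp only [if_neg hp, one_mul]
          have : (ℓf i : ℤ) ≤ k := by exact_mod_cast hℓk i
          omega
      have hsumcast : ((∑ i, t i : ℤ) : ZMod n) = x := by
        rw [← hsum, Finset.sum_congr rfl (fun i _ => hcast i)]
        push_cast
        rfl
      have hncast : (n : ℤ) = 2 * (α : ℤ) * ((α : ℤ) + 4) * (k : ℤ) + 2 * (α : ℤ) + 5 := by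
        rw [hn]; push_cast; ring
      rw [hS] at hxS
      obtain ⟨ℓ0, hℓ0, hx | hx⟩ := hxS
      · have hzero : (((∑ i, t i) - (2 * (α:ℤ) * ℓ0 + 1) : ℤ) : ZMod n) = 0 := by
          rw [Int.cast_sub, hsumcast, hx]
          push_cast
          ring
        have hdvd := (ZMod.intCast_zmod_eq_zero_iff_dvd _ n).mp hzero
        refine keyint (α : ℤ) (k : ℤ) U Pz Mz (ℓ0 : ℤ) 1 (by exact_mod_cast hα)
          (by exact_mod_cast hk) hP0 hM0 hPM hU1 hU2 (by positivity)
          (by exact_mod_cast hℓ0) (Or.inl rfl) ?_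
        rw [← hncast]
        have heq : 2 * (α:ℤ) * U + Pz - Mz - 1 * (2 * (α:ℤ) * (ℓ0:ℤ) + 1)
            = (∑ i, t i) - (2 * (α:ℤ) * ℓ0 + 1) := by
          rw [hsumt]; ring
        rw [heq]
        exact hdvd
      · have hzero : (((∑ i, t i) + (2 * (α:ℤ) * ℓ0 + 1) : ℤ) : ZMod n) = 0 := by
          rw [Int.cast_add, hsumcast, hx]
          push_cast
          ring
        have hdvd := (ZMod.intCast_zmod_eq_zero_iff_dvd _ n).mp hzero
        refine keyint (α : ℤ) (k : ℤ) U Pz Mz (ℓ0 : ℤ) (-1) (by exact_mod_cast hα)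
          (by exact_mod_cast hk) hP0 hM0 hPM hU1 hU2 (by positivity)
          (by exact_mod_cast hℓ0) (Or.inr rfl) ?_
        rw [← hncast]
        have heq : 2 * (α:ℤ) * U + Pz - Mz - (-1) * (2 * (α:ℤ) * (ℓ0:ℤ) + 1)
            = (∑ i, t i) + (2 * (α:ℤ) * ℓ0 + 1) := by
          rw [hsumt]; ring
        rw [heq]
        exact hdvd
    · exact hfull (hsum.trans hx0)
  · intro hx
    push_neg at hx
    obtain ⟨hx1, hx2⟩ := hx
    set r := x.val with hrdef
    have hrn : r < n := ZMod.val_lt x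
    have hr0 : r ≠ 0 := fun h => hx2 ((ZMod.val_eq_zero x).mp h)
    have hxr : ((r : ℕ) : ZMod n) = x := ZMod.natCast_rightInverse x
    have hoddn : n % 2 = 1 := by
      have hexp : n = 2 * (α * (α + 4) * k + α + 2) + 1 := by rw [hn]; ring
      omega
    rcases Nat.even_or_odd r with hre | hro
    · have hexcl : ∀ ℓ, ℓ ≤ k → r + (2 * α * ℓ + 1) ≠ n := by
        intro ℓ hℓ heq
        apply hx1
        rw [hS]
        refine ⟨ℓ, hℓ, Or.inr ?_⟩
        have hz : x + ((2 * α * ℓ + 1 : ℕ) : ZMod n) = 0 := by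
          rw [← hxr, ← Nat.cast_add, heq, ZMod.natCast_self]
        exact eq_neg_of_add_eq_zero_left hz
      have hb := buildEven α k n hα hk hn S hS1 hSneg1 r hrn hre hr0 hexcl
      rwa [hxr] at hb
    · set y := -x with hy
      have hy0 : y ≠ 0 := fun h => hx2 (neg_eq_zero.mp h)
      have hyval : y.val = n - r := by rw [hy, ZMod.neg_val, if_neg hx2]
      have hrodd : r % 2 = 1 := Nat.odd_iff.mp hro
      have hyE : Even (n - r) := Nat.even_iff.mpr (by omega)
      have hexcly : ∀ ℓ, ℓ ≤ k → (n - r) + (2 * α * ℓ + 1) ≠ n := by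
        intro ℓ hℓ heq
        have hreq : r = 2 * α * ℓ + 1 := by omega
        apply hx1
        rw [hS]
        exact ⟨ℓ, hℓ, Or.inl (by rw [← hxr, hreq])⟩
      have hb := buildEven α k n hα hk hn S hS1 hSneg1 (n - r) (by omega) hyE (by omega) hexcly
      have hcy : ((n - r : ℕ) : ZMod n) = y := by
        rw [← hyval]
        exact ZMod.natCast_rightInverse y
      rw [hcy] at hb
      have hres := Rset_neg hScl hb
      rwa [hy, neg_neg] at hres
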